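/- With Z-order coordinates as above, for each α ∈ {0,…,2^d−1} the two points of the central 4×2×…×2 parallelepiped lying in octant α are exactly (α, ᾱ, …, ᾱ) and (α, ᾱ, …, ᾱ, ᾱ XOR 1), where ᾱ is the bitwise complement of α in d bits. -/

import Mathlib

lemma tbNp1 (n k : ℕ) (hn : 2 ≤ n) :
    (2 ^ (n - 1) + 1).testBit k = (decide (k = n - 1) || decide (k = 0)) := by
  obtain ⟨a, ha⟩ : ∃ a, n - 1 = a + 1 := ⟨n - 2, by omega⟩
  rw [ha, pow_succ]
  have h2 : 0 < 2 ^ a := Nat.two_pow_pos a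
  cases k with
  | zero => rw [Nat.testBit_zero]; simp
  | succ k =>
    rw [Nat.testBit_succ]
    have hd : (2 ^ a * 2 + 1) / 2 = 2 ^ a := by omega
    rw [hd, Nat.testBit_two_pow]
    have h0 : decide (k + 1 = 0) = false := by simp
    rw [h0, Bool.or_false, decide_eq_decide]
    omega

lemma tbNm2 (n k : ℕ) (hn : 2 ≤ n) :
    (2 ^ (n - 1) - 2).testBit k = (decide (k < n - 1) && decide (0 < k)) := by
  obtain ⟨a, ha⟩ : ∃ a, n - 1 = a + 1 := ⟨n - 2, by omega⟩
  rw [ha, pow_succ]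
  have h2 : 0 < 2 ^ a := Nat.two_pow_pos a
  cases k with
  | zero => rw [Nat.testBit_zero]; simp; omega
  | succ k =>
    rw [Nat.testBit_succ]
    have hd : (2 ^ a * 2 - 2) / 2 = 2 ^ a - 1 := by omega
    rw [hd, Nat.testBit_two_pow_sub_one]
    have h0 : decide (0 < k + 1) = true := by simp
    rw [h0, Bool.and_true, decide_eq_decide]
    omega

lemma sum_bits : ∀ (d β : ℕ), β < 2 ^ d →
    (∑ j : Fin d, if β.testBit (j : ℕ) then 2 ^ (j : ℕ) else 0) = β := by
  intro d
  induction d with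
  | zero => intro β hβ; interval_cases β; simp
  | succ d ih =>
    intro β hβ
    have hp : (2:ℕ) ^ (d + 1) = 2 * 2 ^ d := by ring
    rw [Fin.sum_univ_succ]
    have h1 : ∀ j : Fin d,
        (if β.testBit ((j.succ : Fin (d+1)) : ℕ) then 2 ^ (((j.succ : Fin (d+1))) : ℕ) else 0)
          = 2 * (if (β / 2).testBit (j : ℕ) then 2 ^ (j : ℕ) else 0) := by
      intro j
      simp only [Fin.val_succ, Nat.testBit_succ, pow_succ]
      split <;> ring
    rw [Finset.sum_congr rfl (fun j _ => h1 j), ← Finset.mul_sum,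
      ih (β / 2) (by omega)]
    have := Nat.testBit_zero β
    rcases Bool.eq_false_or_eq_true (β.testBit 0) with hb | hb <;>
      simp [hb] at this ⊢ <;> omega

lemma sum_bits' (d β : ℕ) (hβ : β < 2 ^ d) (b : Fin d → Bool)
    (hb : ∀ j : Fin d, b j = β.testBit (j : ℕ)) :
    (∑ j : Fin d, if b j then 2 ^ (j : ℕ) else 0) = β := by
  rw [Finset.sum_congr rfl (fun j _ => by rw [hb j]), sum_bits d β hβ]



/-- The `m`-th Z-order coordinate of a point `p ∈ {0,…,2^n−1}^d`. -/
def zord (d n : ℕ) (p : Fin d → ℕ) (m : ℕ) : ℕ :=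
  ∑ j : Fin d, (if (p j).testBit (n - 1 - m) then 2 ^ (j : ℕ) else 0)

/-- The central `4 × 2 × ⋯ × 2` parallelepiped of the cube `{0,…,2^n−1}^d`. -/
def centralBox (d n : ℕ) (h : 0 < d) : Set (Fin d → ℕ) :=
  {p | p ⟨0, h⟩ ∈ Set.Icc (2 ^ (n - 1) - 2) (2 ^ (n - 1) + 1) ∧
       ∀ j, j ≠ ⟨0, h⟩ → p j = 2 ^ (n - 1) - 1 ∨ p j = 2 ^ (n - 1)}

theorem stmt_14 (d n : ℕ) (hd : 2 ≤ d) (hn : 2 ≤ n) (h : 0 < d)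
    (α : ℕ) (hα : α < 2 ^ d) :
    ∃ q₁ q₂ : Fin d → ℕ, q₁ ≠ q₂ ∧
      {p ∈ centralBox d n h |
        ∀ j : Fin d, (α.testBit (j : ℕ) ↔ 2 ^ (n - 1) ≤ p j)} = {q₁, q₂} ∧
      (∀ m < n, zord d n q₁ m = if m = 0 then α else (2 ^ d - 1) ^^^ α) ∧
      (∀ m < n, zord d n q₂ m =
        if m = 0 then α
        else if m = n - 1 then ((2 ^ d - 1) ^^^ α) ^^^ 1
        else (2 ^ d - 1) ^^^ α) := by
  have hN2 : 2 ≤ 2 ^ (n - 1) := by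
    calc (2:ℕ) = 2 ^ 1 := rfl
    _ ≤ 2 ^ (n - 1) := Nat.pow_le_pow_right (by norm_num) (by omega)
  have hdpos : 0 < 2 ^ d := Nat.two_pow_pos d
  have hβlt : (2 ^ d - 1) ^^^ α < 2 ^ d := Nat.xor_lt_two_pow (by omega) hα
  have hβtb : ∀ j : Fin d, ((2 ^ d - 1) ^^^ α).testBit (j : ℕ) = !(α.testBit (j : ℕ)) := by
    intro j
    rw [Nat.testBit_xor, Nat.testBit_two_pow_sub_one]
    have hj : (j : ℕ) < d := j.isLt
    simp [hj]
  refine ⟨fun j => if α.testBit (j : ℕ) then 2 ^ (n - 1) else 2 ^ (n - 1) - 1,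
    fun j => if (j : ℕ) = 0 then (if α.testBit 0 then 2 ^ (n - 1) + 1 else 2 ^ (n - 1) - 2)
      else (if α.testBit (j : ℕ) then 2 ^ (n - 1) else 2 ^ (n - 1) - 1),
    ?_, ?_, ?_, ?_⟩
  · intro heq
    have h0 := congrFun heq ⟨0, h⟩
    simp only at h0
    by_cases hb : α.testBit 0 <;> simp [hb] at h0 <;> omega
  · ext p
    simp only [Set.mem_setOf_eq, Set.mem_insert_iff, Set.mem_singleton_iff, centralBox,
      Set.mem_Icc]
    constructor
    · rintro ⟨⟨hc0, hcj⟩, hoct⟩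
      have hrest : ∀ j : Fin d, (j : ℕ) ≠ 0 →
          p j = (if α.testBit (j : ℕ) then 2 ^ (n - 1) else 2 ^ (n - 1) - 1) := by
        intro j hj
        have hj' : j ≠ ⟨0, h⟩ := by
          intro e; apply hj; rw [e]
        have h1 := hcj j hj'
        have ho := hoct j
        by_cases hb : α.testBit (j : ℕ) <;> simp [hb] at ho ⊢ <;> omega
      have ho := hoct ⟨0, h⟩
      simp only [Fin.val_mk] at ho
      by_cases hb : α.testBit 0
      · simp only [hb, true_iff] at ho
        have h0 : p ⟨0, h⟩ = 2 ^ (n - 1) ∨ p ⟨0, h⟩ = 2 ^ (n - 1) + 1 := by omega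
        rcases h0 with h0 | h0
        · left
          funext j
          by_cases hj : (j : ℕ) = 0
          · have : j = ⟨0, h⟩ := Fin.ext hj
            rw [this, h0]
            simp [hb, hj]
          · rw [hrest j hj]
        · right
          funext j
          by_cases hj : (j : ℕ) = 0
          · have : j = ⟨0, h⟩ := Fin.ext hj
            rw [this, h0]
            simp [hb, hj]
          · rw [hrest j hj]; simp [hj]
      · have ho' : p ⟨0, h⟩ < 2 ^ (n - 1) := by
          by_contra hge
          exact hb (ho.mpr (le_of_not_gt hge))
        have h0 : p ⟨0, h⟩ = 2 ^ (n - 1) - 2 ∨ p ⟨0, h⟩ = 2 ^ (n - 1) - 1 := by omega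
        rcases h0 with h0 | h0
        · right
          funext j
          by_cases hj : (j : ℕ) = 0
          · have : j = ⟨0, h⟩ := Fin.ext hj
            rw [this, h0]
            simp [hb, hj]
          · rw [hrest j hj]; simp [hj]
        · left
          funext j
          by_cases hj : (j : ℕ) = 0
          · have : j = ⟨0, h⟩ := Fin.ext hj
            rw [this, h0]
            simp [hb, hj]
          · rw [hrest j hj]
    · rintro (rfl | rfl)
      · refine ⟨⟨?_, ?_⟩, ?_⟩
        · by_cases hb : α.testBit 0 <;> simp [hb] <;> omega
        · intro j hj
          by_cases hb : α.testBit (j : ℕ) <;> simp [hb]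
        · intro j
          by_cases hb : α.testBit (j : ℕ) <;> simp [hb] <;> omega
      · refine ⟨⟨?_, ?_⟩, ?_⟩
        · by_cases hb : α.testBit 0 <;> simp [hb] <;> omega
        · intro j hj
          have hj0 : (j : ℕ) ≠ 0 := by
            intro e; exact hj (Fin.ext e)
          by_cases hb : α.testBit (j : ℕ) <;> simp [hj0, hb]
        · intro j
          by_cases hj : (j : ℕ) = 0
          · rw [hj]
            by_cases hb : α.testBit 0 <;> simp [hj, hb] <;> omega
          · by_cases hb : α.testBit (j : ℕ) <;> simp [hj, hb] <;> omega
  · intro m hm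
    unfold zord
    by_cases hm0 : m = 0
    · subst hm0
      rw [if_pos rfl]
      apply sum_bits' d α hα
      intro j
      by_cases hb : α.testBit (j : ℕ) <;>
        simp [hb, Nat.testBit_two_pow, Nat.testBit_two_pow_sub_one]
    · rw [if_neg hm0]
      apply sum_bits' d _ hβlt
      intro j
      rw [hβtb]
      have hk : n - 1 - m < n - 1 := by omega
      by_cases hb : α.testBit (j : ℕ) <;>
        simp [hb, Nat.testBit_two_pow, Nat.testBit_two_pow_sub_one] <;> omega
  · intro m hm
    unfold zord
    by_cases hm0 : m = 0
    · subst hm0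
      rw [if_pos rfl]
      apply sum_bits' d α hα
      intro j
      by_cases hj : (j : ℕ) = 0
      · rw [hj]
        by_cases hb : α.testBit 0 <;>
          simp [hj, hb, tbNp1 n _ hn, tbNm2 n _ hn] <;> omega
      · by_cases hb : α.testBit (j : ℕ) <;>
          simp [hj, hb, Nat.testBit_two_pow, Nat.testBit_two_pow_sub_one]
    · rw [if_neg hm0]
      by_cases hm1 : m = n - 1
      · rw [if_pos hm1]
        subst hm1
        have hn10 : n - 1 - (n - 1) = 0 := by omega
        have h1lt : 1 < 2 ^ d := by
          calc (1:ℕ) < 2 ^ 1 := by norm_num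
          _ ≤ 2 ^ d := Nat.pow_le_pow_right (by norm_num) (by omega)
        apply sum_bits' d _ (Nat.xor_lt_two_pow hβlt h1lt)
        intro j
        rw [Nat.testBit_xor, hβtb]
        have h1tb : (1 : ℕ).testBit (j : ℕ) = decide ((j : ℕ) = 0) := by
          have : (1 : ℕ) = 2 ^ 0 := rfl
          rw [this, Nat.testBit_two_pow]
          simp [eq_comm]
        rw [h1tb, hn10]
        by_cases hj : (j : ℕ) = 0
        · rw [hj]
          by_cases hb : α.testBit 0 <;>
            simp [hj, hb, tbNp1 n _ hn, tbNm2 n _ hn] <;> omega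
        · by_cases hb : α.testBit (j : ℕ) <;>
            simp [hj, hb, Nat.testBit_two_pow, Nat.testBit_two_pow_sub_one] <;> omega
      · rw [if_neg hm1]
        apply sum_bits' d _ hβlt
        intro j
        rw [hβtb]
        have hk1 : 0 < n - 1 - m := by omega
        have hk2 : n - 1 - m < n - 1 := by omega
        by_cases hj : (j : ℕ) = 0
        · rw [hj]
          by_cases hb : α.testBit 0 <;>
            simp [hj, hb, tbNp1 n _ hn, tbNm2 n _ hn] <;> omega
        · by_cases hb : α.testBit (j : ℕ) <;>
            simp [hj, hb, Nat.testBit_two_pow, Nat.testBit_two_pow_sub_one] <;> omega
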